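/- Consider the piecewise system Y* = C x + u if D=0 and Y* = C̃ x + c̃ b + ũ if D=1 (D = 1{Y₂* ≤ b}), derived from A Y* = B x + ε with A = Ā when unconstrained and A = A* when constrained. Then C̃₁ = C₁ - β̃C₂ and C̃₂ = κC₂, where β̃ = (A11 - A12*A22*⁻¹A21)⁻¹(A12*A22*⁻¹A22 - A12) and κ = (Ā₂₂ - A21A11⁻¹Ā₁₂)/(A22* - A21A11⁻¹A12*). -/

import Mathlib

open Matrix


/-- Relation between the constrained-regime and unconstrained-regime reduced-form
coefficients: C̃₁ = C₁ - β̃C₂ and C̃₂ = κC₂. -/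
theorem stmt16 (m p : ℕ)
    (A11 : Matrix (Fin m) (Fin m) ℝ) (A12 A12s : Matrix (Fin m) Unit ℝ)
    (A21 : Matrix Unit (Fin m) ℝ) (A22 A22s : ℝ)
    (B : Matrix (Fin m ⊕ Unit) (Fin p) ℝ)
    (hA11 : IsUnit A11.det) (hA22s : A22s ≠ 0)
    (hschurS : A22s - (A21 * A11⁻¹ * A12s) () () ≠ 0)
    (hschurB : (A22 + A22s) - (A21 * A11⁻¹ * (A12 + A12s)) () () ≠ 0)
    (hAbar : IsUnit (Matrix.fromBlocks A11 (A12 + A12s) A21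
      ((A22 + A22s) • (1 : Matrix Unit Unit ℝ))).det)
    (hAs : IsUnit (Matrix.fromBlocks A11 A12s A21
      (A22s • (1 : Matrix Unit Unit ℝ))).det)
    (hsw : IsUnit (A11 - A22s⁻¹ • (A12s * A21)).det)
    (βt : Matrix (Fin m) Unit ℝ)
    (hβt : βt = (A11 - A22s⁻¹ • (A12s * A21))⁻¹ * ((A22 / A22s) • A12s - A12))
    (κ : ℝ)
    (hκ : κ = ((A22 + A22s) - (A21 * A11⁻¹ * (A12 + A12s)) () ()) /
      (A22s - (A21 * A11⁻¹ * A12s) () ())) :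
    ((Matrix.fromBlocks A11 A12s A21 (A22s • (1 : Matrix Unit Unit ℝ)))⁻¹ * B).toRows₁ =
      ((Matrix.fromBlocks A11 (A12 + A12s) A21
        ((A22 + A22s) • (1 : Matrix Unit Unit ℝ)))⁻¹ * B).toRows₁
      - βt * ((Matrix.fromBlocks A11 (A12 + A12s) A21
        ((A22 + A22s) • (1 : Matrix Unit Unit ℝ)))⁻¹ * B).toRows₂ ∧
    ((Matrix.fromBlocks A11 A12s A21 (A22s • (1 : Matrix Unit Unit ℝ)))⁻¹ * B).toRows₂ =
      κ • ((Matrix.fromBlocks A11 (A12 + A12s) A21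
        ((A22 + A22s) • (1 : Matrix Unit Unit ℝ)))⁻¹ * B).toRows₂ := by
  set a : ℝ := (A21 * A11⁻¹ * A12s) () () with ha
  set b : ℝ := (A21 * A11⁻¹ * A12) () () with hb
  set r : Matrix (Fin m) Unit ℝ := (A22 / A22s) • A12s - A12 with hr
  set t : ℝ := (A21 * βt) () () with htdef
  -- S * βt = r
  have hSβ : (A11 - A22s⁻¹ • (A12s * A21)) * βt = r := by
    rw [hβt, Matrix.mul_nonsing_inv_cancel_left _ _ hsw]
  -- A12s * (A21 * βt) = t • A12s
  have hmid : A12s * (A21 * βt) = t • A12s := by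
    ext i j
    cases j
    rw [Matrix.smul_apply, smul_eq_mul, Matrix.mul_apply, Fintype.sum_unique, htdef]
    exact mul_comm _ _
  have h1 : A11 * βt = r + (A22s⁻¹ * t) • A12s := by
    have := hSβ
    rw [Matrix.sub_mul, Matrix.smul_mul, Matrix.mul_assoc, hmid, smul_smul,
      sub_eq_iff_eq_add] at this
    rw [this]
  -- derive scalar equation for t
  have h2 : A21 * (A11⁻¹ * (A11 * βt)) = A21 * (A11⁻¹ * (r + (A22s⁻¹ * t) • A12s)) := by
    rw [h1]
  rw [Matrix.nonsing_inv_mul_cancel_left _ _ hA11] at h2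
  have h3 : t = ((A22 / A22s) * a - b) + (A22s⁻¹ * t) * a := by
    have e1 : A21 * (A11⁻¹ * (r + (A22s⁻¹ * t) • A12s)) =
        (A22 / A22s) • (A21 * A11⁻¹ * A12s) - A21 * A11⁻¹ * A12
          + (A22s⁻¹ * t) • (A21 * A11⁻¹ * A12s) := by
      rw [hr]
      simp only [Matrix.mul_add, Matrix.mul_smul, Matrix.mul_sub, Matrix.mul_assoc]
    rw [e1] at h2
    have := congrArg (fun M => M () ()) h2
    simpa [Matrix.sub_apply, Matrix.add_apply, Matrix.smul_apply, smul_eq_mul] using this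
  have hta : t * (A22s - a) = A22 * a - A22s * b := by
    field_simp at h3
    linarith [h3]
  -- key scalar identities
  have hκ2 : -t + A22s * κ = A22 + A22s := by
    have hba : (A21 * A11⁻¹ * (A12 + A12s)) () () = b + a := by
      simp [Matrix.mul_add, Matrix.add_apply, hb, ha]
    rw [hκ, hba]
    field_simp
    nlinarith [hta]
  have hcoef : κ - A22s⁻¹ * t - A22 / A22s = 1 := by
    have hba : (A21 * A11⁻¹ * (A12 + A12s)) () () = b + a := by
      simp [Matrix.mul_add, Matrix.add_apply, hb, ha]
    rw [hκ, hba]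
    rw [hba] at hschurB
    field_simp
    linear_combination (-1) * hta
  -- block equation 1
  have hb1 : A11 * (-βt) + A12s * (κ • (1 : Matrix Unit Unit ℝ)) = A12 + A12s := by
    have hsm : A12s * (κ • (1 : Matrix Unit Unit ℝ)) = κ • A12s := by
      ext i j; cases j
      rw [Matrix.smul_apply, smul_eq_mul, Matrix.mul_apply, Fintype.sum_unique]
      simp [mul_comm]
    rw [Matrix.mul_neg, h1, hsm, hr]
    have : κ • A12s - ((A22 / A22s) • A12s - A12 + (A22s⁻¹ * t) • A12s)
        = A12 + (κ - A22s⁻¹ * t - A22 / A22s) • A12s := by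
      ext i j; simp [Matrix.smul_apply, Matrix.sub_apply, Matrix.add_apply]; ring
    rw [neg_add_eq_sub, this, hcoef, one_smul]
  -- block equation 2
  have hb2 : A21 * (-βt) + (A22s • (1 : Matrix Unit Unit ℝ)) * (κ • (1 : Matrix Unit Unit ℝ))
      = (A22 + A22s) • (1 : Matrix Unit Unit ℝ) := by
    ext i j
    have : (A21 * (-βt)) () () = -t := by
      simp [Matrix.mul_neg, htdef]
    simp only [Matrix.add_apply, Matrix.smul_mul, Matrix.mul_smul, Matrix.mul_one, smul_smul]
    rw [show i = () from rfl, show j = () from rfl, this]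
    simp [hκ2.symm]; ring
  -- assemble
  set M : Matrix (Fin m ⊕ Unit) (Fin m ⊕ Unit) ℝ :=
    Matrix.fromBlocks 1 (-βt) 0 (κ • (1 : Matrix Unit Unit ℝ)) with hM
  set Abar := Matrix.fromBlocks A11 (A12 + A12s) A21 ((A22 + A22s) • (1 : Matrix Unit Unit ℝ))
  set As := Matrix.fromBlocks A11 A12s A21 (A22s • (1 : Matrix Unit Unit ℝ))
  have hAM : As * M = Abar := by
    rw [hM, Matrix.fromBlocks_multiply]
    rw [Matrix.mul_one, Matrix.mul_zero, Matrix.mul_one, Matrix.mul_zero, add_zero, add_zero,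
      hb1, hb2]
  have hinv : As⁻¹ * B = M * (Abar⁻¹ * B) := by
    have h4 : Abar * (Abar⁻¹ * B) = B := Matrix.mul_nonsing_inv_cancel_left _ _ hAbar
    calc As⁻¹ * B = As⁻¹ * (As * (M * (Abar⁻¹ * B))) := by
          rw [← Matrix.mul_assoc As M, hAM, h4]
      _ = M * (Abar⁻¹ * B) := Matrix.nonsing_inv_mul_cancel_left _ _ hAs
  set C := Abar⁻¹ * B
  have hMC : M * C = Matrix.fromRows (C.toRows₁ - βt * C.toRows₂) (κ • C.toRows₂) := by
    conv_lhs => rw [← Matrix.fromRows_toRows C]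
    rw [hM, Matrix.fromBlocks_mul_fromRows]
    rw [Matrix.one_mul, Matrix.neg_mul, ← sub_eq_add_neg, Matrix.zero_mul, zero_add,
      Matrix.smul_mul, Matrix.one_mul]
  rw [hinv, hMC]
  exact ⟨rfl, rfl⟩
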